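/- Let A be a free ℤ[q,q⁻¹]-module with basis {H_d : d ∈ I} indexed by a finite set I equipped with a function ℓ : I → ℕ, and let bar : A → A be a ℤ-linear involution satisfying bar(q·x) = q⁻¹·bar(x) and bar(H_d) = H_d + ∑_{d' : ℓ(d') < ℓ(d)} r_{d',d} H_{d'} with r_{d',d} ∈ ℤ[q,q⁻¹]. Then there exists a unique basis {C_d : d ∈ I} of A ⊗ ℚ(q) such that bar(C_d) = C_d and C_d = H_d + ∑_{d' : ℓ(d') < ℓ(d)} p_{d',d} H_{d'} with p_{d',d} ∈ q⁻¹ℤ[q⁻¹]. -/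

import Mathlib

open LaurentPolynomial

section LusztigAux

noncomputable abbrev negSpan : Submodule ℤ (LaurentPolynomial ℤ) :=
  Submodule.span ℤ {x : LaurentPolynomial ℤ | ∃ n : ℤ, n ≤ -1 ∧ x = T n}

lemma coeff_zero_of_mem_negSpan {f : LaurentPolynomial ℤ} (hf : f ∈ negSpan) :
    ∀ n : ℤ, 0 ≤ n → f.coeff n = 0 := by
  induction hf using Submodule.span_induction with
  | mem x hx =>
    obtain ⟨m, hm, rfl⟩ := hx
    intro n hn
    have : m ≠ n := by omega
    rw [T_apply]; exact if_neg this
  | zero => intro n _; rfl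
  | add x y _ _ hx hy =>
    intro n hn
    rw [AddMonoidAlgebra.coeff_add, Finsupp.add_apply, hx n hn, hy n hn, add_zero]
  | smul c x _ hx =>
    intro n hn
    rw [AddMonoidAlgebra.coeff_smul, Finsupp.smul_apply, hx n hn, smul_zero]

lemma mem_negSpan_of_coeff {f : LaurentPolynomial ℤ} (hf : ∀ n : ℤ, 0 ≤ n → f.coeff n = 0) :
    f ∈ negSpan := by
  have h := AddMonoidAlgebra.sum_coeff_single f
  rw [← h]
  rw [Finsupp.sum]
  apply Submodule.sum_mem
  intro n hn
  have hn' : n ≤ -1 := by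
    by_contra hc
    exact (Finsupp.mem_support_iff.mp hn) (hf n (by omega))
  have h2 : (AddMonoidAlgebra.single n (f.coeff n) : LaurentPolynomial ℤ) = (f.coeff n) • T n := by
    rw [T, AddMonoidAlgebra.smul_single]; simp
  rw [h2]
  exact Submodule.smul_mem _ _ (Submodule.subset_span ⟨n, hn', rfl⟩)

lemma negSpan_mul {f g : LaurentPolynomial ℤ} (hf : f ∈ negSpan) (hg : g ∈ negSpan) :
    f * g ∈ negSpan := by
  induction hf using Submodule.span_induction with
  | mem x hx =>
    obtain ⟨m, hm, rfl⟩ := hx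
    induction hg using Submodule.span_induction with
    | mem y hy =>
      obtain ⟨k, hk, rfl⟩ := hy
      rw [← T_add]
      exact Submodule.subset_span ⟨m + k, by omega, rfl⟩
    | zero => simp [Submodule.zero_mem]
    | add y z _ _ hy hz => rw [mul_add]; exact Submodule.add_mem _ hy hz
    | smul c y _ hy => rw [mul_smul_comm]; exact Submodule.smul_mem _ _ hy
  | zero => simp [Submodule.zero_mem]
  | add x y _ _ hx hy => rw [add_mul]; exact Submodule.add_mem _ hx hy
  | smul c x _ hx => rw [smul_mul_assoc]; exact Submodule.smul_mem _ _ hx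

lemma eq_zero_of_invert_self {f : LaurentPolynomial ℤ} (hf : f ∈ negSpan)
    (h : invert f = f) : f = 0 := by
  apply LaurentPolynomial.ext
  intro n
  rcases le_or_gt 0 n with hn | hn
  · exact coeff_zero_of_mem_negSpan hf n hn
  · calc f.coeff n = (invert f).coeff n := by rw [h]
    _ = f.coeff (-n) := invert_apply f n
    _ = 0 := coeff_zero_of_mem_negSpan hf (-n) (by omega)



section Main
set_option linter.unusedSectionVars false

variable {I : Type*} [Fintype I]

lemma bar_T_smul (bar : (I →₀ LaurentPolynomial ℤ) →+ (I →₀ LaurentPolynomial ℤ))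
    (hq : ∀ x, bar ((T 1 : LaurentPolynomial ℤ) • x) =
      (T (-1) : LaurentPolynomial ℤ) • bar x)
    (n : ℤ) (x : I →₀ LaurentPolynomial ℤ) :
    bar ((T n : LaurentPolynomial ℤ) • x) = (T (-n) : LaurentPolynomial ℤ) • bar x := by
  induction n using Int.induction_on with
  | zero => simp [T_zero]
  | succ k ih =>
    have h1 : (T ((k : ℤ) + 1) : LaurentPolynomial ℤ) • x
        = (T 1 : LaurentPolynomial ℤ) • ((T (k : ℤ) : LaurentPolynomial ℤ) • x) := by
      rw [smul_smul, ← T_add]; ring_nf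
    rw [h1, hq, ih, smul_smul, ← T_add]
    ring_nf
  | pred k ih =>
    have key : bar ((T (-(k : ℤ)) : LaurentPolynomial ℤ) • x)
        = (T (-1) : LaurentPolynomial ℤ) • bar ((T (-(k : ℤ) - 1) : LaurentPolynomial ℤ) • x) := by
      rw [← hq, smul_smul, ← T_add]
      ring_nf
    rw [ih] at key
    have h2 := congrArg (fun z => (T 1 : LaurentPolynomial ℤ) • z) key
    simp only [smul_smul, ← T_add] at h2
    norm_num at h2
    rw [← h2]
    have h3 : (-(-(k : ℤ) - 1)) = 1 + (k : ℤ) := by ring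
    rw [h3]

lemma single_eq_zsmul_T (n : ℤ) (c : ℤ) :
    (AddMonoidAlgebra.single n c : LaurentPolynomial ℤ) = c • (T n : LaurentPolynomial ℤ) := by
  rw [T, AddMonoidAlgebra.smul_single]; simp

lemma bar_poly_smul (bar : (I →₀ LaurentPolynomial ℤ) →+ (I →₀ LaurentPolynomial ℤ))
    (hq : ∀ x, bar ((T 1 : LaurentPolynomial ℤ) • x) =
      (T (-1) : LaurentPolynomial ℤ) • bar x)
    (f : LaurentPolynomial ℤ) (x : I →₀ LaurentPolynomial ℤ) :
    bar (f • x) = (invert f : LaurentPolynomial ℤ) • bar x := by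
  induction f using AddMonoidAlgebra.induction with
  | zero => simp
  | single_add n c g _ _ ih =>
    rw [add_smul, map_add, ih, map_add, add_smul]
    congr 1
    rw [single_eq_zsmul_T, smul_assoc, map_zsmul, bar_T_smul bar hq, map_zsmul, invert_T,
      ← smul_assoc]

lemma repr_eq_sum (x : I →₀ LaurentPolynomial ℤ) :
    x = ∑ d, Finsupp.single d (x d) := by
  exact (Finsupp.univ_sum_single x).symm

lemma bar_eq_sum (bar : (I →₀ LaurentPolynomial ℤ) →+ (I →₀ LaurentPolynomial ℤ))
    (hq : ∀ x, bar ((T 1 : LaurentPolynomial ℤ) • x) =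
      (T (-1) : LaurentPolynomial ℤ) • bar x)
    (x : I →₀ LaurentPolynomial ℤ) :
    bar x = ∑ d, (invert (x d) : LaurentPolynomial ℤ) • bar (Finsupp.single d 1) := by
  conv_lhs => rw [repr_eq_sum x]
  rw [map_sum]
  apply Finset.sum_congr rfl
  intro d _
  have h1 : (Finsupp.single d (x d) : I →₀ LaurentPolynomial ℤ)
      = (x d) • Finsupp.single d 1 := by
    rw [Finsupp.smul_single]; simp
  rw [h1, bar_poly_smul bar hq]


variable {I : Type*} [Fintype I]

lemma coeff_form [DecidableEq I] (d e : I) (q : I → LaurentPolynomial ℤ) :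
    (Finsupp.single d 1 + ∑ d', Finsupp.single d' (q d') : I →₀ LaurentPolynomial ℤ) e
      = (if d = e then 1 else 0) + q e := by
  rw [Finsupp.add_apply, Finsupp.finset_sum_apply]
  congr 1
  · exact Finsupp.single_apply
  · rw [Finset.sum_congr rfl (fun d' _ => (Finsupp.single_apply :
      (Finsupp.single d' (q d') : I →₀ LaurentPolynomial ℤ) e = _)), Finset.sum_ite_eq']
    simp

lemma sum_smul_apply (u : I → LaurentPolynomial ℤ) (CC : I → (I →₀ LaurentPolynomial ℤ))
    (e : I) : (∑ d, u d • CC d) e = ∑ d, u d * (CC d) e := by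
  rw [Finsupp.finset_sum_apply]
  exact Finset.sum_congr rfl fun d _ => by rw [Finsupp.smul_apply, smul_eq_mul]

/-- linear independence of a triangular family -/
lemma indep (ℓ : I → ℕ) (CC : I → (I →₀ LaurentPolynomial ℤ)) (u : I → LaurentPolynomial ℤ)
    (htri : ∀ d, u d ≠ 0 → ∃ p : I → LaurentPolynomial ℤ,
      (∀ d'', p d'' ≠ 0 → ℓ d'' < ℓ d) ∧
      CC d = Finsupp.single d 1 + ∑ d'', Finsupp.single d'' (p d''))
    (hsum : ∑ d, u d • CC d = 0) : ∀ d, u d = 0 := by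
  classical
  by_contra hc
  push_neg at hc
  obtain ⟨d₁, hd₁⟩ := hc
  have hne : (Finset.univ.filter (fun d => u d ≠ 0)).Nonempty :=
    ⟨d₁, by simp [hd₁]⟩
  obtain ⟨d₀, hd₀mem, hd₀max⟩ := Finset.exists_max_image _ ℓ hne
  have hd₀ : u d₀ ≠ 0 := (Finset.mem_filter.mp hd₀mem).2
  have heval : ∑ d, u d * (CC d) d₀ = 0 := by
    rw [← sum_smul_apply, hsum]; rfl
  have hterm : ∀ d, u d * (CC d) d₀ = if d = d₀ then u d₀ else 0 := by
    intro d
    by_cases hud : u d = 0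
    · have hdd : d ≠ d₀ := fun h => hd₀ (h ▸ hud)
      simp [hud, hdd]
    · obtain ⟨p, hp1, hp2⟩ := htri d hud
      have hld : ℓ d ≤ ℓ d₀ := hd₀max d (by simp [hud])
      have hpd₀ : p d₀ = 0 := by
        by_contra hp
        exact absurd (hp1 d₀ hp) (by omega)
      rw [hp2, coeff_form, hpd₀, add_zero]
      by_cases hdd : d = d₀ <;> simp [hdd, hud]
  rw [Finset.sum_congr rfl (fun d _ => hterm d), Finset.sum_ite_eq'] at heval
  simp at heval
  exact hd₀ heval


lemma zero_of_bar_fixed (ℓ : I → ℕ)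
    (bar : (I →₀ LaurentPolynomial ℤ) →+ (I →₀ LaurentPolynomial ℤ))
    (hq : ∀ x, bar ((T 1 : LaurentPolynomial ℤ) • x) =
      (T (-1) : LaurentPolynomial ℤ) • bar x)
    (hH : ∀ d : I, ∃ r : I → LaurentPolynomial ℤ,
      (∀ d', r d' ≠ 0 → ℓ d' < ℓ d) ∧
      bar (Finsupp.single d 1) =
        Finsupp.single d 1 + ∑ d', Finsupp.single d' (r d'))
    (X : I →₀ LaurentPolynomial ℤ) (hbar : bar X = X)
    (hneg : ∀ e, X e ∈ negSpan) : X = 0 := by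
  classical
  by_contra hX
  obtain ⟨d₁, hd₁⟩ : ∃ d, X d ≠ 0 := by
    by_contra hc
    push_neg at hc
    exact hX (Finsupp.ext hc)
  have hne : (Finset.univ.filter (fun d => X d ≠ 0)).Nonempty := ⟨d₁, by simp [hd₁]⟩
  obtain ⟨d₀, hd₀mem, hd₀max⟩ := Finset.exists_max_image _ ℓ hne
  have hd₀ : X d₀ ≠ 0 := (Finset.mem_filter.mp hd₀mem).2
  have heval : X d₀ = ∑ d, invert (X d) * (bar (Finsupp.single d 1)) d₀ := by
    conv_lhs => rw [← hbar]
    rw [bar_eq_sum bar hq X, sum_smul_apply]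
  have hterm : ∀ d, invert (X d) * (bar (Finsupp.single d 1)) d₀
      = if d = d₀ then invert (X d₀) else 0 := by
    intro d
    by_cases hXd : X d = 0
    · have hdd : d ≠ d₀ := fun h => hd₀ (h ▸ hXd)
      simp [hXd, hdd]
    · obtain ⟨r, hr1, hr2⟩ := hH d
      have hld : ℓ d ≤ ℓ d₀ := hd₀max d (by simp [hXd])
      have hrd₀ : r d₀ = 0 := by
        by_contra hr
        exact absurd (hr1 d₀ hr) (by omega)
      rw [hr2, coeff_form, hrd₀, add_zero]
      by_cases hdd : d = d₀ <;> simp [hdd]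
  rw [Finset.sum_congr rfl (fun d _ => hterm d), Finset.sum_ite_eq'] at heval
  simp only [Finset.mem_univ, if_true] at heval
  have : X d₀ = 0 := eq_zero_of_invert_self (hneg d₀) heval.symm
  exact hd₀ this

lemma span_lemma (ℓ : I → ℕ) (N : ℕ) (CC : I → (I →₀ LaurentPolynomial ℤ))
    (hC : ∀ d, ℓ d < N → ∃ p : I → LaurentPolynomial ℤ,
      (∀ d'', p d'' ≠ 0 → ℓ d'' < ℓ d) ∧
      CC d = Finsupp.single d 1 + ∑ d'', Finsupp.single d'' (p d'')) :
    ∀ m, m ≤ N → ∀ a : I → LaurentPolynomial ℤ, (∀ d, a d ≠ 0 → ℓ d < m) →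
    ∃ s : I → LaurentPolynomial ℤ, (∀ d, s d ≠ 0 → ℓ d < m) ∧
      (∑ d, Finsupp.single d (a d)) = ∑ d, s d • CC d := by
  classical
  intro m
  induction m with
  | zero =>
    intro _ a ha
    refine ⟨0, by simp, ?_⟩
    have h0 : ∀ d, a d = 0 := fun d => by
      by_contra hc; exact absurd (ha d hc) (by omega)
    simp [h0]
  | succ m ih =>
    intro hmN a ha
    -- choose coefficients for CC
    set pp : I → I → LaurentPolynomial ℤ :=
      fun d => if h : ℓ d < N then (hC d h).choose else 0 with hpp
    have hpp1 : ∀ d, ℓ d < N → ∀ d'', pp d d'' ≠ 0 → ℓ d'' < ℓ d := by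
      intro d h
      simp only [hpp, dif_pos h]
      exact (hC d h).choose_spec.1
    have hpp2 : ∀ d, ℓ d < N →
        CC d = Finsupp.single d 1 + ∑ d'', Finsupp.single d'' (pp d d'') := by
      intro d h
      simp only [hpp, dif_pos h]
      exact (hC d h).choose_spec.2
    set b : I → LaurentPolynomial ℤ := fun e => -∑ d, a d * pp d e with hb
    have hbsupp : ∀ e, b e ≠ 0 → ℓ e < m := by
      intro e hbe
      by_contra hle
      apply hbe
      simp only [hb, neg_eq_zero]
      apply Finset.sum_eq_zero
      intro d _
      by_cases had : a d = 0
      · simp [had]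
      · have hld : ℓ d < m + 1 := ha d had
        have hpe : pp d e = 0 := by
          by_contra hc
          have := hpp1 d (by omega) e hc
          omega
        simp [hpe]
    have hkey : (∑ d, Finsupp.single d (a d) : I →₀ LaurentPolynomial ℤ)
        = ∑ d, a d • CC d + ∑ e, Finsupp.single e (b e) := by
      apply Finsupp.ext
      intro e
      rw [Finsupp.add_apply, sum_smul_apply, Finsupp.finset_sum_apply,
        Finsupp.finset_sum_apply]
      have h1 : ∀ d : I, (Finsupp.single d (a d) : I →₀ LaurentPolynomial ℤ) e
          = if d = e then a d else 0 := fun d => Finsupp.single_apply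
      have h2 : ∀ d : I, a d * (CC d) e
          = (if d = e then a d else 0) + a d * pp d e := by
        intro d
        by_cases had : a d = 0
        · simp [had]
        · rw [hpp2 d (by have := ha d had; omega), coeff_form, mul_add]
          congr 1
          by_cases hde : d = e <;> simp [hde]
      rw [Finset.sum_congr rfl (fun d _ => h1 d),
        Finset.sum_congr rfl (fun d _ => h2 d), Finset.sum_add_distrib,
        Finset.sum_congr rfl
          (fun e' _ => (Finsupp.single_apply :
            (Finsupp.single e' (b e') : I →₀ LaurentPolynomial ℤ) e = _))]
      rw [Finset.sum_ite_eq' Finset.univ e b]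
      simp only [Finset.mem_univ, if_true, hb]
      ring
    obtain ⟨t, ht1, ht2⟩ := ih (by omega) b hbsupp
    refine ⟨fun d => a d + t d, ?_, ?_⟩
    · intro d hd
      by_cases had : a d = 0
      · have : t d ≠ 0 := by simpa [had] using hd
        have := ht1 d this
        omega
      · exact ha d had
    · rw [hkey, ht2, ← Finset.sum_add_distrib]
      exact Finset.sum_congr rfl fun d _ => (add_smul _ _ _).symm

def IsGood (ℓ : I → ℕ)
    (bar : (I →₀ LaurentPolynomial ℤ) →+ (I →₀ LaurentPolynomial ℤ))
    (d : I) (X : I →₀ LaurentPolynomial ℤ) : Prop :=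
  bar X = X ∧ ∃ p : I → LaurentPolynomial ℤ,
    (∀ d', p d' ≠ 0 → ℓ d' < ℓ d) ∧
    (∀ d', p d' ∈ Submodule.span ℤ
      {x : LaurentPolynomial ℤ | ∃ n : ℤ, n ≤ -1 ∧ x = T n}) ∧
    X = Finsupp.single d 1 + ∑ d', Finsupp.single d' (p d')

lemma good_unique (ℓ : I → ℕ)
    (bar : (I →₀ LaurentPolynomial ℤ) →+ (I →₀ LaurentPolynomial ℤ))
    (hq : ∀ x, bar ((T 1 : LaurentPolynomial ℤ) • x) =
      (T (-1) : LaurentPolynomial ℤ) • bar x)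
    (hH : ∀ d : I, ∃ r : I → LaurentPolynomial ℤ,
      (∀ d', r d' ≠ 0 → ℓ d' < ℓ d) ∧
      bar (Finsupp.single d 1) =
        Finsupp.single d 1 + ∑ d', Finsupp.single d' (r d'))
    (d : I) (X Y : I →₀ LaurentPolynomial ℤ)
    (hX : IsGood ℓ bar d X) (hY : IsGood ℓ bar d Y) : X = Y := by
  classical
  obtain ⟨hbX, pX, _, hpXn, hpXf⟩ := hX
  obtain ⟨hbY, pY, _, hpYn, hpYf⟩ := hY
  have hbar : bar (X - Y) = X - Y := by rw [map_sub, hbX, hbY]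
  have hneg : ∀ e, (X - Y) e ∈ negSpan := by
    intro e
    rw [Finsupp.sub_apply, hpXf, hpYf, coeff_form, coeff_form]
    have : ((if d = e then (1 : LaurentPolynomial ℤ) else 0) + pX e)
        - ((if d = e then 1 else 0) + pY e) = pX e - pY e := by ring
    rw [this]
    exact Submodule.sub_mem _ (hpXn e) (hpYn e)
  have := zero_of_bar_fixed ℓ bar hq hH (X - Y) hbar hneg
  exact sub_eq_zero.mp this

lemma exists_good (ℓ : I → ℕ)
    (bar : (I →₀ LaurentPolynomial ℤ) →+ (I →₀ LaurentPolynomial ℤ))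
    (hinv : ∀ x, bar (bar x) = x)
    (hq : ∀ x, bar ((T 1 : LaurentPolynomial ℤ) • x) =
      (T (-1) : LaurentPolynomial ℤ) • bar x)
    (hH : ∀ d : I, ∃ r : I → LaurentPolynomial ℤ,
      (∀ d', r d' ≠ 0 → ℓ d' < ℓ d) ∧
      bar (Finsupp.single d 1) =
        Finsupp.single d 1 + ∑ d', Finsupp.single d' (r d')) :
    ∀ n : ℕ, ∀ d : I, ℓ d = n → ∃ X, IsGood ℓ bar d X := by
  classical
  intro n
  induction n using Nat.strong_induction_on with
  | _ n IH =>
  intro d hd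
  -- the family of already constructed elements
  set CC : I → (I →₀ LaurentPolynomial ℤ) :=
    fun d' => if h : ℓ d' < n then (IH (ℓ d') h d' rfl).choose else 0 with hCC
  have hCCgood : ∀ d', ℓ d' < n → IsGood ℓ bar d' (CC d') := by
    intro d' h
    simp only [hCC, dif_pos h]
    exact (IH (ℓ d') h d' rfl).choose_spec
  -- coefficients of CC in the H basis
  set pp : I → I → LaurentPolynomial ℤ :=
    fun d' => if h : ℓ d' < n then (hCCgood d' h).2.choose else 0 with hpp
  have hpp1 : ∀ d', (h : ℓ d' < n) → ∀ e, pp d' e ≠ 0 → ℓ e < ℓ d' := by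
    intro d' h
    simp only [hpp, dif_pos h]
    exact (hCCgood d' h).2.choose_spec.1
  have hpp2 : ∀ d', (h : ℓ d' < n) → ∀ e, pp d' e ∈ negSpan := by
    intro d' h
    simp only [hpp, dif_pos h]
    exact (hCCgood d' h).2.choose_spec.2.1
  have hpp3 : ∀ d', (h : ℓ d' < n) →
      CC d' = Finsupp.single d' 1 + ∑ e, Finsupp.single e (pp d' e) := by
    intro d' h
    simp only [hpp, dif_pos h]
    exact (hCCgood d' h).2.choose_spec.2.2
  have hCCbar : ∀ d', ℓ d' < n → bar (CC d') = CC d' := fun d' h => (hCCgood d' h).1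
  obtain ⟨r, hr1, hr2⟩ := hH d
  have hr1' : ∀ d', r d' ≠ 0 → ℓ d' < n := by intro d' h; rw [← hd]; exact hr1 d' h
  -- express z = bar H_d - H_d in the CC family
  obtain ⟨sc, hs1, hs2⟩ := span_lemma ℓ n CC
    (fun d' h => ⟨pp d', hpp1 d' h, hpp3 d' h⟩) n le_rfl r hr1'
  set z : I →₀ LaurentPolynomial ℤ := ∑ d', Finsupp.single d' (r d') with hz
  have hzeq : z = bar (Finsupp.single d 1) - Finsupp.single d 1 := by
    rw [hr2]; abel
  have hbarz : bar z = -z := by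
    rw [hzeq, map_sub, hinv]; abel
  -- antisymmetry of coefficients
  have hbarz2 : bar z = ∑ d', invert (sc d') • CC d' := by
    rw [hs2, map_sum]
    apply Finset.sum_congr rfl
    intro d' _
    rw [bar_poly_smul bar hq]
    by_cases hscd : sc d' = 0
    · simp [hscd]
    · rw [hCCbar d' (hs1 d' hscd)]
  have hanti : ∀ d', invert (sc d') = -(sc d') := by
    have hsum0 : ∑ d', (invert (sc d') + sc d') • CC d' = 0 := by
      have heq : (∑ d', (invert (sc d') + sc d') • CC d')
          = bar z + z := by
        rw [hbarz2]
        conv_rhs => rw [hs2]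
        rw [← Finset.sum_add_distrib]
        exact Finset.sum_congr rfl fun d' _ => add_smul _ _ _
      rw [heq, hbarz]; abel
    have h0 := indep ℓ CC (fun d' => invert (sc d') + sc d')
      (by
        intro d' hu
        have hscd : sc d' ≠ 0 := by
          by_contra hc
          apply hu
          simp [hc]
        exact ⟨pp d', hpp1 d' (hs1 d' hscd), hpp3 d' (hs1 d' hscd)⟩) hsum0
    intro d'
    have h1 := h0 d'
    exact eq_neg_of_add_eq_zero_left h1
  have hanti' : ∀ d' k, (sc d').coeff (-k) = -((sc d').coeff k) := by
    intro d' k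
    have h1 : (invert (sc d')).coeff k = (-(sc d')).coeff k := by rw [hanti d']
    rwa [invert_apply, AddMonoidAlgebra.coeff_neg, Finsupp.neg_apply] at h1
  -- negative parts
  set p : I → LaurentPolynomial ℤ :=
    fun d' => AddMonoidAlgebra.ofCoeff (Finsupp.filter (fun k => k < 0) (sc d').coeff) with hp
  have hp_apply : ∀ d' k, (p d').coeff k = if k < 0 then (sc d').coeff k else 0 := by
    intro d' k
    simp only [hp]
    exact Finsupp.filter_apply _ _ _
  have hp_supp : ∀ d', p d' ≠ 0 → sc d' ≠ 0 := by
    intro d' h hsc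
    apply h
    simp [hp, hsc, Finsupp.filter_zero]
  have hp_neg : ∀ d', p d' ∈ negSpan := fun d' =>
    mem_negSpan_of_coeff (fun k hk => by rw [hp_apply]; exact if_neg (by omega))
  have hsc_eq : ∀ d', sc d' = p d' - invert (p d') := by
    intro d'
    apply LaurentPolynomial.ext
    intro k
    rw [AddMonoidAlgebra.coeff_sub, Finsupp.sub_apply, invert_apply, hp_apply, hp_apply]
    rcases lt_trichotomy k 0 with h | h | h
    · rw [if_pos h, if_neg (by omega)]
      ring
    · subst h
      have h0 := hanti' d' 0
      simp only [neg_zero] at h0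
      simp only [lt_irrefl, if_neg (lt_irrefl (0:ℤ))]
      omega
    · rw [if_neg (by omega), if_pos (by omega), hanti' d' k]
      ring
  -- the canonical basis element
  set X : I →₀ LaurentPolynomial ℤ :=
    Finsupp.single d 1 + ∑ d', p d' • CC d' with hX
  have hbarX : bar X = X := by
    rw [hX, map_add, hr2, map_sum]
    have hterm : ∀ d', bar (p d' • CC d') = invert (p d') • CC d' := by
      intro d'
      rw [bar_poly_smul bar hq]
      by_cases h : p d' = 0
      · simp [h]
      · rw [hCCbar d' (hs1 d' (hp_supp d' h))]
    rw [Finset.sum_congr rfl (fun d' _ => hterm d'), hs2, add_assoc,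
      ← Finset.sum_add_distrib]
    congr 1
    apply Finset.sum_congr rfl
    intro d' _
    rw [← add_smul]
    congr 1
    rw [hsc_eq d']
    ring
  set qc : I → LaurentPolynomial ℤ :=
    fun e => p e + ∑ d', p d' * pp d' e with hqc
  have hXform : X = Finsupp.single d 1 + ∑ e, Finsupp.single e (qc e) := by
    apply Finsupp.ext
    intro e
    rw [hX, Finsupp.add_apply, sum_smul_apply, coeff_form]
    congr 1
    · exact Finsupp.single_apply
    have hterm2 : ∀ d', p d' * (CC d') e
        = (if d' = e then p d' else 0) + p d' * pp d' e := by
      intro d'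
      by_cases h : p d' = 0
      · simp [h]
      · rw [hpp3 d' (hs1 d' (hp_supp d' h)), coeff_form, mul_add]
        congr 1
        by_cases hde : d' = e <;> simp [hde]
    rw [Finset.sum_congr rfl (fun d' _ => hterm2 d'), Finset.sum_add_distrib,
      Finset.sum_ite_eq' Finset.univ e p]
    simp only [Finset.mem_univ, if_true, hqc]
  have hq_supp : ∀ e, qc e ≠ 0 → ℓ e < ℓ d := by
    intro e he
    rw [hd]
    by_contra hle
    apply he
    simp only [hqc]
    have h1 : p e = 0 := by
      by_contra hc
      exact absurd (hs1 e (hp_supp e hc)) (by omega)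
    rw [h1, zero_add]
    apply Finset.sum_eq_zero
    intro d' _
    by_cases h : p d' = 0
    · simp [h]
    · have hld' : ℓ d' < n := hs1 d' (hp_supp d' h)
      have hppz : pp d' e = 0 := by
        by_contra hc
        exact absurd (hpp1 d' hld' e hc) (by omega)
      simp [hppz]
  have hq_neg : ∀ e, qc e ∈ negSpan := by
    intro e
    apply Submodule.add_mem _ (hp_neg e)
    apply Submodule.sum_mem
    intro d' _
    by_cases h : p d' = 0
    · simp [h, Submodule.zero_mem]
    · exact negSpan_mul (hp_neg d') (hpp2 d' (hs1 d' (hp_supp d' h)) e)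
  exact ⟨X, hbarX, qc, hq_supp, hq_neg, hXform⟩

end Main

/-- Lusztig's lemma: let `A` be the free `ℤ[q,q⁻¹]`-module with basis `{H_d : d ∈ I}`
(modelled as `I →₀ ℤ[q,q⁻¹]` with `H_d = single d 1`, where `q = T 1`), with a
`ℤ`-linear involution `bar` satisfying `bar (q • x) = q⁻¹ • bar x` and
`bar H_d = H_d + ∑_{ℓ(d') < ℓ(d)} r_{d',d} H_{d'}`.  Then there is a unique family
`{C_d}` with `bar C_d = C_d` and `C_d = H_d + ∑_{ℓ(d') < ℓ(d)} p_{d',d} H_{d'}` where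
each `p_{d',d}` lies in `q⁻¹ ℤ[q⁻¹]` (the `ℤ`-span of `T n`, `n ≤ -1`). -/
theorem lusztig_lemma (I : Type*) [Fintype I] (ℓ : I → ℕ)
    (bar : (I →₀ LaurentPolynomial ℤ) →+ (I →₀ LaurentPolynomial ℤ))
    (hinv : ∀ x, bar (bar x) = x)
    (hq : ∀ x, bar ((T 1 : LaurentPolynomial ℤ) • x) =
      (T (-1) : LaurentPolynomial ℤ) • bar x)
    (hH : ∀ d : I, ∃ r : I → LaurentPolynomial ℤ,
      (∀ d', r d' ≠ 0 → ℓ d' < ℓ d) ∧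
      bar (Finsupp.single d 1) =
        Finsupp.single d 1 + ∑ d', Finsupp.single d' (r d')) :
    ∃! C : I → (I →₀ LaurentPolynomial ℤ),
      ∀ d, bar (C d) = C d ∧
        ∃ p : I → LaurentPolynomial ℤ,
          (∀ d', p d' ≠ 0 → ℓ d' < ℓ d) ∧
          (∀ d', p d' ∈ Submodule.span ℤ
            {x : LaurentPolynomial ℤ | ∃ n : ℤ, n ≤ -1 ∧ x = T n}) ∧
          C d = Finsupp.single d 1 + ∑ d', Finsupp.single d' (p d') := by
  classical
  refine ⟨fun d => (exists_good ℓ bar hinv hq hH (ℓ d) d rfl).choose, ?_, ?_⟩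
  · intro d
    exact (exists_good ℓ bar hinv hq hH (ℓ d) d rfl).choose_spec
  · intro C' hC'
    funext d
    exact good_unique ℓ bar hq hH d (C' d) _ (hC' d)
      (exists_good ℓ bar hinv hq hH (ℓ d) d rfl).choose_spec
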